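/- Tensor product equivalence: the tensor product pseudospectral approximation equals the tensor product Lagrange interpolant: ∑_{𝐢∈ℐ_𝐧} f̂_𝐢 π_𝐢(s) = ∑_{𝐢∈ℐ_𝐧} f(λ_𝐢) ℓ_𝐢(s) for all s ∈ 𝒮, where ℓ_𝐢(s) = ℓ_{i₁}(s₁)⋯ℓ_{i_d}(s_d). -/

import Mathlib

open MeasureTheory Polynomial Finset

private lemma sum_antisymm {n : ℕ} (F : Fin n → Fin n → ℝ)
    (h : ∀ i m, F i m = -F m i) : (∑ i, ∑ m, F i m) = 0 := by
  have h1 : (∑ i, ∑ m, F i m) = -(∑ i, ∑ m, F i m) := by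
    calc (∑ i, ∑ m, F i m) = ∑ m, ∑ i, F i m := Finset.sum_comm
      _ = ∑ m, ∑ i, -(F m i) :=
          Finset.sum_congr rfl fun m _ => Finset.sum_congr rfl fun i _ => h i m
      _ = -(∑ m, ∑ i, F m i) := by simp
  linarith

private lemma span_lemma (p : ℕ → Polynomial ℝ)
    (hpne : ∀ i, p (i + 1) ≠ 0) (hpdeg : ∀ i, (p (i + 1)).natDegree = i) :
    ∀ (D : ℕ) (q : Polynomial ℝ), q.natDegree ≤ D → ∀ (N : ℕ), q.degree < (N : ℕ) →
      ∃ a : Fin N → ℝ, q = ∑ i : Fin N, Polynomial.C (a i) * p ((i : ℕ) + 1) := by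
  intro D
  induction D using Nat.strong_induction_on with
  | _ D ih =>
  intro q hqD N hqN
  by_cases hq : q = 0
  · exact ⟨0, by simp [hq]⟩
  have hmN : q.natDegree < N := (Polynomial.natDegree_lt_iff_degree_lt hq).mpr hqN
  set m := q.natDegree with hm
  have hlc : (p (m + 1)).leadingCoeff ≠ 0 := Polynomial.leadingCoeff_ne_zero.mpr (hpne m)
  set c : ℝ := q.leadingCoeff / (p (m + 1)).leadingCoeff with hc
  have hc0 : c ≠ 0 := div_ne_zero (Polynomial.leadingCoeff_ne_zero.mpr hq) hlc
  have hdeg_eq : q.degree = (Polynomial.C c * p (m + 1)).degree := by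
    rw [Polynomial.degree_C_mul hc0, Polynomial.degree_eq_natDegree hq,
      Polynomial.degree_eq_natDegree (hpne m), hpdeg m]
  have hlceq : q.leadingCoeff = (Polynomial.C c * p (m + 1)).leadingCoeff := by
    rw [Polynomial.leadingCoeff_mul, Polynomial.leadingCoeff_C, hc,
      div_mul_cancel₀ _ hlc]
  set q' : Polynomial ℝ := q - Polynomial.C c * p (m + 1) with hq'
  have hq'lt : q'.degree < (m : WithBot ℕ) := by
    have := Polynomial.degree_sub_lt hdeg_eq hq hlceq
    rwa [Polynomial.degree_eq_natDegree hq] at this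
  obtain ⟨a', ha'⟩ : ∃ a' : Fin N → ℝ,
      q' = ∑ i : Fin N, Polynomial.C (a' i) * p ((i : ℕ) + 1) := by
    by_cases hq'0 : q' = 0
    · exact ⟨0, by simp [hq'0]⟩
    · have hlt : q'.natDegree < m := (Polynomial.natDegree_lt_iff_degree_lt hq'0).mpr hq'lt
      exact ih q'.natDegree (lt_of_lt_of_le hlt hqD) q' le_rfl N
        (lt_trans hq'lt (by exact_mod_cast hmN))
  refine ⟨fun i => a' i + if (i : ℕ) = m then c else 0, ?_⟩
  have hqsplit : q = q' + Polynomial.C c * p (m + 1) := by rw [hq']; ring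
  rw [hqsplit, ha']
  simp only [map_add, add_mul, Finset.sum_add_distrib]
  congr 1
  rw [Finset.sum_eq_single (⟨m, hmN⟩ : Fin N)]
  · simp
  · intro b _ hb
    have : (b : ℕ) ≠ m := fun h => hb (Fin.ext h)
    simp [this]
  · simp

private lemma coeff_formula (S : Set ℝ) (w : ℝ → ℝ) (p : ℕ → Polynomial ℝ)
    (hint : ∀ q : Polynomial ℝ, IntegrableOn (fun s => q.eval s * w s) S)
    (horth : ∀ i j, 1 ≤ i → 1 ≤ j →
      ∫ s in S, (p i).eval s * (p j).eval s * w s = if i = j then 1 else 0)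
    (N : ℕ) (a : Fin N → ℝ) (m : Fin N) :
    ∫ x in S, (∑ i : Fin N, Polynomial.C (a i) * p ((i : ℕ) + 1)).eval x
        * (p ((m : ℕ) + 1)).eval x * w x = a m := by
  have hfun : ∀ x, (∑ i : Fin N, Polynomial.C (a i) * p ((i : ℕ) + 1)).eval x
      * (p ((m : ℕ) + 1)).eval x * w x
      = ∑ i : Fin N, a i * ((p ((i : ℕ) + 1)).eval x * (p ((m : ℕ) + 1)).eval x * w x) := by
    intro x
    simp only [Polynomial.eval_finset_sum, Polynomial.eval_mul, Polynomial.eval_C,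
      Finset.sum_mul]
    exact Finset.sum_congr rfl fun i _ => by ring
  simp only [hfun]
  rw [MeasureTheory.integral_finset_sum]
  · have hterm : ∀ i : Fin N,
        ∫ x in S, a i * ((p ((i : ℕ) + 1)).eval x * (p ((m : ℕ) + 1)).eval x * w x)
          = a i * if (i : ℕ) + 1 = (m : ℕ) + 1 then 1 else 0 := by
      intro i
      rw [MeasureTheory.integral_const_mul, horth _ _ (Nat.le_add_left 1 _) (Nat.le_add_left 1 _)]
    simp only [hterm]
    rw [Finset.sum_eq_single m]
    · simp
    · intro b _ hb
      have : (b : ℕ) + 1 ≠ (m : ℕ) + 1 := fun h => hb (Fin.ext (Nat.succ_injective h))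
      rw [if_neg this, mul_zero]
    · simp
  · intro i _
    simpa [Polynomial.eval_mul, mul_assoc] using (hint (p ((i : ℕ) + 1) * p ((m : ℕ) + 1))).const_mul (a i)

private lemma cd_nodes (n : ℕ) (S : Set ℝ) (w : ℝ → ℝ) (p : ℕ → Polynomial ℝ)
    (lam : Fin n → ℝ)
    (hpne : ∀ i, p (i + 1) ≠ 0) (hpdeg : ∀ i, (p (i + 1)).natDegree = i)
    (hint : ∀ q : Polynomial ℝ, IntegrableOn (fun s => q.eval s * w s) S)
    (horth : ∀ i j, 1 ≤ i → 1 ≤ j →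
      ∫ s in S, (p i).eval s * (p j).eval s * w s = if i = j then 1 else 0)
    (hroot : ∀ j : Fin n, (p (n + 1)).eval (lam j) = 0)
    (hinj : Function.Injective lam)
    (j m : Fin n) (hjm : j ≠ m) :
    ∑ i : Fin n, (p ((i : ℕ) + 1)).eval (lam j) * (p ((i : ℕ) + 1)).eval (lam m) = 0 := by
  -- the three-term-type expansion of X * p (i+1) in the basis p 1, ..., p (n+1)
  have key : ∀ i : Fin n, ∀ x : ℝ, x * (p ((i : ℕ) + 1)).eval x
      = ∑ k : Fin (n + 1),
          (∫ t in S, t * (p ((i : ℕ) + 1)).eval t * (p ((k : ℕ) + 1)).eval t * w t)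
            * (p ((k : ℕ) + 1)).eval x := by
    intro i x
    have hdegq : (Polynomial.X * p ((i : ℕ) + 1)).degree < ((n + 1 : ℕ) : WithBot ℕ) := by
      have hne : Polynomial.X * p ((i : ℕ) + 1) ≠ 0 :=
        mul_ne_zero Polynomial.X_ne_zero (hpne _)
      rw [← Polynomial.natDegree_lt_iff_degree_lt hne,
        Polynomial.natDegree_mul Polynomial.X_ne_zero (hpne _),
        Polynomial.natDegree_X, hpdeg]
      omega
    obtain ⟨a, ha⟩ := span_lemma p hpne hpdeg (Polynomial.X * p ((i : ℕ) + 1)).natDegree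
      (Polynomial.X * p ((i : ℕ) + 1)) le_rfl (n + 1) hdegq
    have hak : ∀ k : Fin (n + 1),
        a k = ∫ t in S, t * (p ((i : ℕ) + 1)).eval t * (p ((k : ℕ) + 1)).eval t * w t := by
      intro k
      have h1 := coeff_formula S w p hint horth (n + 1) a k
      rw [← ha] at h1
      simp only [Polynomial.eval_mul, Polynomial.eval_X] at h1
      exact h1.symm
    have hx := congrArg (Polynomial.eval x) ha
    simp only [Polynomial.eval_mul, Polynomial.eval_X, Polynomial.eval_finset_sum,
      Polynomial.eval_C] at hx
    rw [hx]
    exact Finset.sum_congr rfl fun k _ => by rw [hak k]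
  have hxy : lam j - lam m ≠ 0 := sub_ne_zero.mpr (fun h => hjm (hinj h))
  set x := lam j with hxdef
  set y := lam m with hydef
  have main : (x - y) * ∑ i : Fin n, (p ((i : ℕ) + 1)).eval x * (p ((i : ℕ) + 1)).eval y = 0 := ?_
  · exact (mul_eq_zero.mp main).resolve_left hxy
  have step1 : (x - y) * ∑ i : Fin n, (p ((i : ℕ) + 1)).eval x * (p ((i : ℕ) + 1)).eval y
      = ∑ i : Fin n, ((x * (p ((i : ℕ) + 1)).eval x) * (p ((i : ℕ) + 1)).eval y
          - (p ((i : ℕ) + 1)).eval x * (y * (p ((i : ℕ) + 1)).eval y)) := by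
    rw [Finset.mul_sum]
    exact Finset.sum_congr rfl fun i _ => by ring
  rw [step1]
  have step2 : ∀ i : Fin n,
      (x * (p ((i : ℕ) + 1)).eval x) * (p ((i : ℕ) + 1)).eval y
          - (p ((i : ℕ) + 1)).eval x * (y * (p ((i : ℕ) + 1)).eval y)
      = ∑ k : Fin (n + 1),
          (∫ t in S, t * (p ((i : ℕ) + 1)).eval t * (p ((k : ℕ) + 1)).eval t * w t)
            * ((p ((k : ℕ) + 1)).eval x * (p ((i : ℕ) + 1)).eval y
               - (p ((i : ℕ) + 1)).eval x * (p ((k : ℕ) + 1)).eval y) := by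
    intro i
    rw [key i x, key i y, Finset.sum_mul, Finset.mul_sum, ← Finset.sum_sub_distrib]
    exact Finset.sum_congr rfl fun k _ => by ring
  simp only [step2]
  have step3 : ∀ i : Fin n,
      (∑ k : Fin (n + 1),
          (∫ t in S, t * (p ((i : ℕ) + 1)).eval t * (p ((k : ℕ) + 1)).eval t * w t)
            * ((p ((k : ℕ) + 1)).eval x * (p ((i : ℕ) + 1)).eval y
               - (p ((i : ℕ) + 1)).eval x * (p ((k : ℕ) + 1)).eval y))
      = ∑ k : Fin n,
          (∫ t in S, t * (p ((i : ℕ) + 1)).eval t * (p ((k : ℕ) + 1)).eval t * w t)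
            * ((p ((k : ℕ) + 1)).eval x * (p ((i : ℕ) + 1)).eval y
               - (p ((i : ℕ) + 1)).eval x * (p ((k : ℕ) + 1)).eval y) := by
    intro i
    rw [Fin.sum_univ_castSucc]
    simp only [Fin.coe_castSucc, Fin.val_last]
    rw [hroot j, hroot m]
    simp
  simp only [step3]
  apply sum_antisymm
  intro i k
  have hsym : (∫ t in S, t * (p ((i : ℕ) + 1)).eval t * (p ((k : ℕ) + 1)).eval t * w t)
      = ∫ t in S, t * (p ((k : ℕ) + 1)).eval t * (p ((i : ℕ) + 1)).eval t * w t := by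
    congr 1
    funext t
    ring
  rw [hsym]
  ring

private lemma univar (n : ℕ) (S : Set ℝ) (w : ℝ → ℝ) (p : ℕ → Polynomial ℝ)
    (lam : Fin n → ℝ) (ν : Fin n → ℝ)
    (hpne : ∀ i, p (i + 1) ≠ 0) (hpdeg : ∀ i, (p (i + 1)).natDegree = i)
    (hint : ∀ q : Polynomial ℝ, IntegrableOn (fun s => q.eval s * w s) S)
    (horth : ∀ i j, 1 ≤ i → 1 ≤ j →
      ∫ s in S, (p i).eval s * (p j).eval s * w s = if i = j then 1 else 0)
    (hroot : ∀ j : Fin n, (p (n + 1)).eval (lam j) = 0)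
    (hinj : Function.Injective lam)
    (hν : ∀ j, ν j = 1 / ∑ i : Fin n, ((p ((i : ℕ) + 1)).eval (lam j)) ^ 2)
    (j : Fin n) (s : ℝ) :
    ∑ i : Fin n, ν j * ((p ((i : ℕ) + 1)).eval (lam j) * (p ((i : ℕ) + 1)).eval s)
      = ∏ m ∈ Finset.univ.erase j, (s - lam m) / (lam j - lam m) := by
  have hn : 0 < n := j.pos
  -- the kernel polynomial
  set G : Polynomial ℝ := Polynomial.C (ν j) *
    ∑ i : Fin n, Polynomial.C ((p ((i : ℕ) + 1)).eval (lam j)) * p ((i : ℕ) + 1) with hG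
  have hinjOn : Set.InjOn lam (Finset.univ : Finset (Fin n)) := fun a _ b _ h => hinj h
  have hcard : #(Finset.univ : Finset (Fin n)) = n := Finset.card_univ.trans (Fintype.card_fin n)
  -- degree bound
  have hGdeg : G.degree < (#(Finset.univ : Finset (Fin n)) : WithBot ℕ) := by
    rw [hcard]
    calc G.degree ≤ (Polynomial.C (ν j)).degree +
          (∑ i : Fin n, Polynomial.C ((p ((i : ℕ) + 1)).eval (lam j)) * p ((i : ℕ) + 1)).degree :=
        Polynomial.degree_mul_le _ _
      _ ≤ 0 + (∑ i : Fin n, Polynomial.C ((p ((i : ℕ) + 1)).eval (lam j)) * p ((i : ℕ) + 1)).degree := by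
        gcongr
        exact Polynomial.degree_C_le
      _ = (∑ i : Fin n, Polynomial.C ((p ((i : ℕ) + 1)).eval (lam j)) * p ((i : ℕ) + 1)).degree := by
        rw [zero_add]
      _ < (n : WithBot ℕ) := by
        apply lt_of_le_of_lt (Polynomial.degree_sum_le _ _)
        rw [Finset.sup_lt_iff (by exact_mod_cast WithBot.bot_lt_coe n)]
        intro i _
        calc (Polynomial.C ((p ((i : ℕ) + 1)).eval (lam j)) * p ((i : ℕ) + 1)).degree
            ≤ 0 + (p ((i : ℕ) + 1)).degree := le_trans (Polynomial.degree_mul_le _ _)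
              (by gcongr; exact Polynomial.degree_C_le)
          _ = (p ((i : ℕ) + 1)).degree := zero_add _
          _ = ((i : ℕ) : WithBot ℕ) := by
              rw [Polynomial.degree_eq_natDegree (hpne _), hpdeg]
          _ < (n : WithBot ℕ) := by exact_mod_cast i.isLt
  -- evaluation at the nodes
  have hGeval : ∀ m : Fin n, G.eval (lam m) = if j = m then 1 else 0 := by
    intro m
    have hGm : G.eval (lam m)
        = ν j * ∑ i : Fin n, (p ((i : ℕ) + 1)).eval (lam j) * (p ((i : ℕ) + 1)).eval (lam m) := by
      simp [hG, Polynomial.eval_finset_sum]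
    by_cases hjm : j = m
    · subst hjm
      rw [hGm, hν j, if_pos rfl]
      have hpos : 0 < ∑ i : Fin n, ((p ((i : ℕ) + 1)).eval (lam j)) ^ 2 := by
        apply Finset.sum_pos' (fun i _ => sq_nonneg _)
        refine ⟨⟨0, hn⟩, Finset.mem_univ _, ?_⟩
        have h0 : (p 1).natDegree = 0 := hpdeg 0
        obtain ⟨c, hc⟩ := Polynomial.natDegree_eq_zero.mp h0
        have hc0 : c ≠ 0 := by
          intro h; apply hpne 0; rw [← hc, h, map_zero]
        have hev : (p 1).eval (lam j) = c := by rw [← hc, Polynomial.eval_C]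
        simp only [Fin.val_mk, Nat.zero_add]
        rw [hev]
        positivity
      have : ∑ i : Fin n, (p ((i : ℕ) + 1)).eval (lam j) * (p ((i : ℕ) + 1)).eval (lam j)
          = ∑ i : Fin n, ((p ((i : ℕ) + 1)).eval (lam j)) ^ 2 :=
        Finset.sum_congr rfl fun i _ => (sq _).symm
      rw [this, one_div, inv_mul_cancel₀ (ne_of_gt hpos)]
    · rw [hGm, cd_nodes n S w p lam hpne hpdeg hint horth hroot hinj j m hjm, mul_zero,
        if_neg hjm]
  -- G equals the Lagrange basis polynomial
  have hbasis : G = Lagrange.basis Finset.univ lam j := by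
    apply Polynomial.eq_of_degrees_lt_of_eval_index_eq Finset.univ hinjOn hGdeg
    · rw [Lagrange.degree_basis hinjOn (Finset.mem_univ j), hcard]
      exact_mod_cast Nat.pred_lt hn.ne'
    · intro m _
      rw [hGeval m, Lagrange.basis, Polynomial.eval_prod]
      by_cases hjm : j = m
      · subst hjm
        rw [if_pos rfl]
        symm
        apply Finset.prod_eq_one
        intro k hk
        have : lam j ≠ lam k := fun h =>
          (Finset.mem_erase.mp hk).1 (hinj h).symm
        exact Lagrange.eval_basisDivisor_left_of_ne this
      · rw [if_neg hjm]
        symm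
        apply Finset.prod_eq_zero (Finset.mem_erase.mpr ⟨Ne.symm hjm, Finset.mem_univ m⟩)
        exact Lagrange.eval_basisDivisor_right
  have := congrArg (Polynomial.eval s) hbasis
  simp only [hG, Polynomial.eval_mul, Polynomial.eval_C, Polynomial.eval_finset_sum] at this
  rw [Finset.mul_sum] at this
  rw [this]
  rw [Lagrange.basis, Polynomial.eval_prod]
  apply Finset.prod_congr rfl
  intro k _
  rw [Lagrange.basisDivisor]
  simp only [Polynomial.eval_mul, Polynomial.eval_C, Polynomial.eval_sub, Polynomial.eval_X]
  rw [div_eq_inv_mul]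

/-- Tensor product equivalence: the tensor product pseudospectral approximation equals the
tensor product Lagrange interpolant on the tensor grid of Gaussian nodes. -/
theorem stmt_12 (d : ℕ) (n : Fin d → ℕ) (hn : ∀ k, 0 < n k)
    (S : Fin d → Set ℝ) (w : Fin d → ℝ → ℝ) (p : Fin d → ℕ → Polynomial ℝ)
    (lam : ∀ k, Fin (n k) → ℝ) (ν : ∀ k, Fin (n k) → ℝ)
    (hS : ∀ k, MeasurableSet (S k))
    (hw : ∀ k, ∀ s ∈ S k, 0 < w k s)
    (hdeg : ∀ k i, 1 ≤ i → (p k i).natDegree = i - 1)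
    (hint : ∀ k (q : Polynomial ℝ), IntegrableOn (fun s => q.eval s * w k s) (S k))
    (horth : ∀ k i j, 1 ≤ i → 1 ≤ j →
      ∫ s in S k, (p k i).eval s * (p k j).eval s * w k s = if i = j then 1 else 0)
    (hroot : ∀ k (j : Fin (n k)), (p k (n k + 1)).eval (lam k j) = 0)
    (hinj : ∀ k, Function.Injective (lam k))
    (hν : ∀ k j, ν k j = 1 / ∑ i : Fin (n k), ((p k ((i : ℕ) + 1)).eval (lam k j)) ^ 2)
    (f : (Fin d → ℝ) → ℝ) (fhat : (∀ k, Fin (n k)) → ℝ)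
    (hfhat : ∀ i : ∀ k, Fin (n k),
      fhat i = ∑ j : ∀ k, Fin (n k), f (fun k => lam k (j k)) *
        (∏ k, (p k ((i k : ℕ) + 1)).eval (lam k (j k))) * ∏ k, ν k (j k)) :
    ∀ s : Fin d → ℝ,
      ∑ i : ∀ k, Fin (n k), fhat i * ∏ k, (p k ((i k : ℕ) + 1)).eval (s k)
        = ∑ i : ∀ k, Fin (n k), f (fun k => lam k (i k)) *
            ∏ k, ∏ j ∈ Finset.univ.erase (i k),
              (s k - lam k j) / (lam k (i k) - lam k j) := by
  intro s
  have hpne : ∀ k (i : ℕ), p k (i + 1) ≠ 0 := by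
    intro k i h
    have h1 := horth k (i + 1) (i + 1) (by omega) (by omega)
    rw [if_pos rfl, h] at h1
    simp at h1
  have hpdeg : ∀ k (i : ℕ), (p k (i + 1)).natDegree = i := by
    intro k i
    have := hdeg k (i + 1) (by omega)
    simpa using this
  have huni : ∀ (k : Fin d) (j : Fin (n k)),
      ∑ i : Fin (n k), ν k j *
          ((p k ((i : ℕ) + 1)).eval (lam k j) * (p k ((i : ℕ) + 1)).eval (s k))
        = ∏ m ∈ Finset.univ.erase j, (s k - lam k m) / (lam k j - lam k m) :=
    fun k j => univar (n k) (S k) (w k) (p k) (lam k) (ν k) (hpne k) (hpdeg k)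
      (hint k) (horth k) (hroot k) (hinj k) (hν k) j (s k)
  calc
    ∑ i : ∀ k, Fin (n k), fhat i * ∏ k, (p k ((i k : ℕ) + 1)).eval (s k)
        = ∑ i : ∀ k, Fin (n k), ∑ j : ∀ k, Fin (n k),
            f (fun k => lam k (j k)) * ∏ k, (ν k (j k) *
              ((p k ((i k : ℕ) + 1)).eval (lam k (j k))
                * (p k ((i k : ℕ) + 1)).eval (s k))) := by
      refine Finset.sum_congr rfl fun i _ => ?_
      rw [hfhat i, Finset.sum_mul]
      refine Finset.sum_congr rfl fun j _ => ?_
      rw [Finset.prod_mul_distrib, Finset.prod_mul_distrib]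
      ring
    _ = ∑ j : ∀ k, Fin (n k), f (fun k => lam k (j k)) *
          ∏ k, ∑ i : Fin (n k), ν k (j k) *
            ((p k ((i : ℕ) + 1)).eval (lam k (j k)) * (p k ((i : ℕ) + 1)).eval (s k)) := by
      rw [Finset.sum_comm]
      refine Finset.sum_congr rfl fun j _ => ?_
      rw [← Finset.mul_sum]
      congr 1
      exact (Fintype.prod_sum (fun k (i : Fin (n k)) => ν k (j k) *
        ((p k ((i : ℕ) + 1)).eval (lam k (j k)) * (p k ((i : ℕ) + 1)).eval (s k)))).symm
    _ = ∑ i : ∀ k, Fin (n k), f (fun k => lam k (i k)) *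
          ∏ k, ∏ j ∈ Finset.univ.erase (i k),
            (s k - lam k j) / (lam k (i k) - lam k j) := by
      refine Finset.sum_congr rfl fun j _ => ?_
      congr 1
      exact Finset.prod_congr rfl fun k _ => huni k (j k)
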